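/- Let (X,d) be a metric space, S, T : X → X, λ ∈ [0, 1/2), and suppose d(T(S x), T(S y)) ≤ λ·(d(T x, T(S x)) + d(T y, T(S y))) for all x, y ∈ X. Then for every x₀ ∈ X, the sequence {T(Sⁿ x₀)} is a Cauchy sequence in X. -/

import Mathlib

theorem kannan_iterates_cauchy
    {X : Type*} [MetricSpace X]
    (S T : X → X)
    (lam : ℝ) (hlam0 : 0 ≤ lam) (hlam : lam < 1/2)
    (h : ∀ x y : X, dist (T (S x)) (T (S y)) ≤
      lam * (dist (T x) (T (S x)) + dist (T y) (T (S y))))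
    (x₀ : X) :
    CauchySeq (fun n => T (S^[n] x₀)) := by
  set f : ℕ → X := fun n => T (S^[n] x₀) with hf
  set a : ℕ → ℝ := fun n => dist (f n) (f (n + 1)) with ha
  have hlam1 : lam < 1 := by linarith
  have h1lam : 0 < 1 - lam := by linarith
  set r : ℝ := lam / (1 - lam) with hr
  have hr0 : 0 ≤ r := div_nonneg hlam0 h1lam.le
  have hr1 : r < 1 := by
    rw [div_lt_one h1lam]; linarith
  have hstep : ∀ n, a (n + 1) ≤ r * a n := by
    intro n
    have key := h (S^[n] x₀) (S^[n + 1] x₀)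
    have e1 : S (S^[n] x₀) = S^[n + 1] x₀ := (Function.iterate_succ_apply' S n x₀).symm
    have e2 : S (S^[n + 1] x₀) = S^[n + 2] x₀ := (Function.iterate_succ_apply' S (n + 1) x₀).symm
    rw [e1, e2] at key
    have : a (n + 1) ≤ lam * (a n + a (n + 1)) := key
    rw [hr, div_mul_eq_mul_div, le_div_iff₀ h1lam]
    nlinarith [this]
  have hgeo : ∀ n, a n ≤ a 0 * r ^ n := by
    intro n
    induction n with
    | zero => simp
    | succ k ih =>
      calc a (k + 1) ≤ r * a k := hstep k
        _ ≤ r * (a 0 * r ^ k) := by nlinarith [dist_nonneg (x := f k) (y := f (k+1))]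
        _ = a 0 * r ^ (k + 1) := by ring
  exact cauchySeq_of_le_geometric r (a 0) hr1 hgeo
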